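/- arXiv:1508.06590 — 3 statements merged into one kernel-verified Lean document; each statement's English description precedes it below -/
import Mathlib

section
/- Let ∅ ≠ Θ ⊆ Λ with Λ a finite subset of ℤ². If Λ^c is connected, Θ is ⋆-connected, and Θ̄⋆ ∩ ∂̲Λ ≠ ∅, then Λ^c ∪ Θ̄⋆ is connected. -/
open scoped Classical
open Filter MeasureTheory

namespace Paper

abbrev Site (d : ℕ) := Fin d → ℤ

/-- The `i`-th canonical basis vector in `ℤ^d`. -/
def ee (d : ℕ) (i : Fin d) : Site d := fun j => if j = i then 1 else 0

section General

variable {d : ℕ} {A : Type} [Fintype A] [DecidableEq A]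

/-- A configuration `ω` is feasible on a set `Λ` for the constraints `E`. -/
def FeasibleOn (E : Fin d → Set (A × A)) (Λ : Set (Site d)) (ω : Site d → A) : Prop :=
  ∀ x ∈ Λ, ∀ i : Fin d, x + ee d i ∈ Λ → (ω x, ω (x + ee d i)) ∉ E i

/-- The nearest-neighbour SFT `Ω(ℰ)`. -/
def Omega (E : Fin d → Set (A × A)) : Set (Site d → A) := {ω | FeasibleOn E Set.univ ω}

/-- The energy of a configuration on a finite set `Λ`. -/
noncomputable def energy (Φ₀ : A → ℝ) (Φ₁ : Fin d → A → A → ℝ)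
    (Λ : Finset (Site d)) (ω : Site d → A) : ℝ :=
  (∑ x ∈ Λ, Φ₀ (ω x)) +
    ∑ i : Fin d, ∑ x ∈ Λ.filter (fun x => x + ee d i ∈ Λ), Φ₁ i (ω x) (ω (x + ee d i))

/-- Feasibility of a configuration on a finite set, intrinsic version. -/
def FeasibleC (E : Fin d → Set (A × A)) (Λ : Finset (Site d))
    (θ : {x // x ∈ Λ} → A) : Prop :=
  ∀ (x : {x // x ∈ Λ}) (i : Fin d) (h : (x : Site d) + ee d i ∈ Λ),
    (θ x, θ ⟨(x : Site d) + ee d i, h⟩) ∉ E i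

/-- Energy of a configuration on a finite set, intrinsic version. -/
noncomputable def energyC (Φ₀ : A → ℝ) (Φ₁ : Fin d → A → A → ℝ)
    (Λ : Finset (Site d)) (θ : {x // x ∈ Λ} → A) : ℝ :=
  (∑ x : {x // x ∈ Λ}, Φ₀ (θ x)) +
    ∑ i : Fin d, ∑ x : {x // x ∈ Λ},
      if h : (x : Site d) + ee d i ∈ Λ then Φ₁ i (θ x) (θ ⟨(x : Site d) + ee d i, h⟩) else 0

/-- The partition function `Z^Φ_Λ`, summing over feasible (locally admissible) configurations. -/
noncomputable def Zpart (E : Fin d → Set (A × A)) (Φ₀ : A → ℝ) (Φ₁ : Fin d → A → A → ℝ)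
    (Λ : Finset (Site d)) : ℝ :=
  ∑ θ : {x // x ∈ Λ} → A,
    if FeasibleC E Λ θ then Real.exp (-energyC Φ₀ Φ₁ Λ θ) else 0

/-- The closure `Λ ∪ ∂Λ` of a finite set. -/
def closureF (Λ : Finset (Site d)) : Finset (Site d) :=
  Λ ∪ Finset.univ.biUnion fun i : Fin d => Λ.image (· + ee d i) ∪ Λ.image (· - ee d i)

/-- The (outer) boundary `∂Λ`. -/
def bdry (Λ : Finset (Site d)) : Finset (Site d) := closureF Λ \ Λ

/-- Combine a configuration `θ` on `Λ` with a configuration `ω` off `Λ`. -/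
def patch (Λ : Finset (Site d)) (θ : {x // x ∈ Λ} → A) (ω : Site d → A) : Site d → A :=
  fun x => if h : x ∈ Λ then θ ⟨x, h⟩ else ω x

/-- The Gibbsian weight of a configuration `θ` on `Λ` with boundary condition `ω(∂Λ)`. -/
noncomputable def bWeight (E : Fin d → Set (A × A)) (Φ₀ : A → ℝ) (Φ₁ : Fin d → A → A → ℝ)
    (Λ : Finset (Site d)) (ω : Site d → A) (θ : {x // x ∈ Λ} → A) : ℝ :=
  if FeasibleOn E (↑(closureF Λ)) (patch Λ θ ω) then
    Real.exp (-energy Φ₀ Φ₁ (closureF Λ) (patch Λ θ ω)) else 0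

/-- The probability assigned by the specification `π^{ω(∂Λ)}_Λ` to an event `Ev`. -/
noncomputable def piProb (E : Fin d → Set (A × A)) (Φ₀ : A → ℝ) (Φ₁ : Fin d → A → A → ℝ)
    (Λ : Finset (Site d)) (ω : Site d → A) (Ev : (Site d → A) → Prop) : ℝ :=
  (∑ θ : {x // x ∈ Λ} → A, if Ev (patch Λ θ ω) then bWeight E Φ₀ Φ₁ Λ ω θ else 0) /
    ∑ θ : {x // x ∈ Λ} → A, bWeight E Φ₀ Φ₁ Λ ω θ

/-- Lexicographic (strict) order on `ℤ^d`. -/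
def lexLt (x y : Site d) : Prop := ∃ i, (∀ j, j < i → x j = y j) ∧ x i < y i

/-- The block `B_n = [-n,n]^d ∩ ℤ^d`. -/
noncomputable def boxF (d n : ℕ) : Finset (Site d) := Finset.Icc (fun _ => -(n : ℤ)) fun _ => (n : ℤ)

/-- `S_n = B_n \ 𝒫`, where `𝒫` is the lexicographic past. -/
noncomputable def SF (d n : ℕ) : Finset (Site d) := (boxF d n).filter fun x => ¬lexLt x 0

/-- `S_{y,z} = {x ≽ 0 : -y ≤ x ≤ z}`. -/
noncomputable def SyzF {d : ℕ} (y z : Site d) : Finset (Site d) :=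
  (Finset.Icc (-y) z).filter fun x => ¬lexLt x 0

/-- `π_Λ(ω) = π^{ω(∂Λ)}_Λ(θ(0) = ω(0))`. -/
noncomputable def piAt (E : Fin d → Set (A × A)) (Φ₀ : A → ℝ) (Φ₁ : Fin d → A → A → ℝ)
    (Λ : Finset (Site d)) (ω : Site d → A) : ℝ :=
  piProb E Φ₀ Φ₁ Λ ω fun σ => σ 0 = ω 0

/-- `π_n(ω)`. -/
noncomputable def piN (E : Fin d → Set (A × A)) (Φ₀ : A → ℝ) (Φ₁ : Fin d → A → A → ℝ)
    (n : ℕ) (ω : Site d → A) : ℝ :=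
  piAt E Φ₀ Φ₁ (SF d n) ω

/-- `π_{y,z}(ω)`. -/
noncomputable def piYZ (E : Fin d → Set (A × A)) (Φ₀ : A → ℝ) (Φ₁ : Fin d → A → A → ℝ)
    (y z : Site d) (ω : Site d → A) : ℝ :=
  piAt E Φ₀ Φ₁ (SyzF y z) ω

/-- `A_Φ(ω) = -Φ(ω(0)) - Σ_i Φ(ω({0,e_i}))`. -/
noncomputable def AΦ (Φ₀ : A → ℝ) (Φ₁ : Fin d → A → A → ℝ) (ω : Site d → A) : ℝ :=
  -Φ₀ (ω 0) - ∑ i, Φ₁ i (ω 0) (ω (ee d i))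

/-- `θ`, given on the set `Λ`, extends to a point of `Ω(ℰ)` (global admissibility). -/
def extendsOmega (E : Fin d → Set (A × A)) (Λ : Set (Site d)) (θ : Site d → A) : Prop :=
  ∃ ω ∈ Omega E, ∀ x ∈ Λ, ω x = θ x

/-- The square block D-condition. -/
def SquareBlockD (E : Fin d → Set (A × A)) : Prop :=
  ∃ r : ℕ → ℕ, Tendsto (fun n => (r n : ℝ) / (n : ℝ)) atTop (nhds 0) ∧
    ∀ (n : ℕ) (Λ : Finset (Site d)), (∀ x ∈ Λ, x ∉ boxF d (n + r n)) →
      ∀ θ τ : Site d → A, extendsOmega E ↑(boxF d n) θ → extendsOmega E ↑Λ τ →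
        ∃ ω ∈ Omega E, (∀ x ∈ boxF d n, ω x = θ x) ∧ ∀ x ∈ Λ, ω x = τ x

/-- `c_π(ν) = inf {π_Λ(ω) : 0 ∈ Λ finite, ω ∈ supp(ν)}` (with `S = supp(ν)`). -/
noncomputable def cpi (E : Fin d → Set (A × A)) (Φ₀ : A → ℝ) (Φ₁ : Fin d → A → A → ℝ)
    (S : Set (Site d → A)) : ℝ :=
  sInf {r | ∃ Λ : Finset (Site d), (0 : Site d) ∈ Λ ∧ ∃ ω ∈ S, r = piAt E Φ₀ Φ₁ Λ ω}

/-- The shift action. -/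
def shift (t : Site d) (ω : Site d → A) : Site d → A := fun x => ω (x + t)

/-- The cylinder set of configurations agreeing with `θ` on `Λ`. -/
def cylinder (Λ : Finset (Site d)) (θ : Site d → A) : Set (Site d → A) :=
  {σ | ∀ x ∈ Λ, σ x = θ x}

/-- The support of a measure, following the paper's definition. -/
def measSupport [MeasurableSpace A] (ν : Measure (Site d → A)) : Set (Site d → A) :=
  {ω | ∀ Λ : Finset (Site d), 0 < ν (cylinder Λ ω)}

/-- Shift-invariance (stationarity) of a measure. -/
def ShiftInvariant [MeasurableSpace A] (ν : Measure (Site d → A)) : Prop :=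
  ∀ t : Site d, Measure.map (shift t) ν = ν

/-- `ℓ¹` distance on `ℤ^d`. -/
noncomputable def dist1 (x y : Site d) : ℝ := ∑ i, ((x i - y i).natAbs : ℝ)

/-- `ℓ¹` distance between two finite sets. -/
noncomputable def setDist (Θ Sg : Finset (Site d)) : ℝ :=
  sInf {r | ∃ x ∈ Θ, ∃ y ∈ Sg, r = dist1 x y}

/-- Nearest-neighbour adjacency on `ℤ^d`. -/
def adj (x y : Site d) : Prop := (∑ i, (x i - y i).natAbs) = 1

/-- `⋆`-adjacency on `ℤ^d` (`0 < ‖x-y‖_∞ ≤ 1`). -/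
def starAdj (x y : Site d) : Prop := x ≠ y ∧ ∀ i, (x i - y i).natAbs ≤ 1

/-- Connectedness of a subset of `ℤ^d` with respect to adjacency. -/
def ConnectedSet (S : Set (Site d)) : Prop :=
  ∀ x ∈ S, ∀ y ∈ S, Relation.ReflTransGen (fun u v => u ∈ S ∧ v ∈ S ∧ adj u v) x y

/-- Connectedness with respect to `⋆`-adjacency. -/
def StarConnectedSet (S : Set (Site d)) : Prop :=
  ∀ x ∈ S, ∀ y ∈ S, Relation.ReflTransGen (fun u v => u ∈ S ∧ v ∈ S ∧ starAdj u v) x y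

/-- `⋆`-closure of a finite set. -/
noncomputable def starClosureF (Θ : Finset (Site d)) : Finset (Site d) :=
  Θ ∪ Θ.biUnion fun x => ((Finset.Icc (fun _ => (-1 : ℤ)) fun _ => (1 : ℤ)).erase 0).image (x + ·)

/-- `⋆`-boundary of a finite set. -/
noncomputable def starBdryF (Θ : Finset (Site d)) : Finset (Site d) := starClosureF Θ \ Θ

/-- Inner boundary of a finite set. -/
noncomputable def innerBdry (Λ : Finset (Site d)) : Finset (Site d) :=
  Λ.filter fun x => ∃ y, adj x y ∧ y ∉ Λ

end General

section Percolation

/-- The open cluster of `x` in a site configuration `σ` on `ℤ^d`. -/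
def openCluster {d : ℕ} (σ : Site d → Bool) (x : Site d) : Set (Site d) :=
  {y | Relation.ReflTransGen (fun u v => adj u v ∧ σ u = true ∧ σ v = true) x y}

/-- There is an infinite connected component of `1`'s. -/
def HasInfiniteCluster {d : ℕ} (σ : Site d → Bool) : Prop :=
  ∃ x, σ x = true ∧ (openCluster σ x).Infinite

/-- `μ` is the i.i.d. Bernoulli(`p`) site percolation measure on `{0,1}^{ℤ^d}`. -/
def IsBernoulliProduct {d : ℕ} (p : ℝ) (μ : Measure (Site d → Bool)) : Prop :=
  IsProbabilityMeasure μ ∧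
    ∀ (Λ : Finset (Site d)) (η : Site d → Bool),
      (μ (cylinder Λ η)).toReal = ∏ x ∈ Λ, if η x then p else 1 - p

/-- The critical probability of Bernoulli site percolation on `ℤ²`. -/
noncomputable def pc : ℝ :=
  sSup {p : ℝ | 0 ≤ p ∧ p ≤ 1 ∧
    ∀ μ : Measure (Site 2 → Bool), IsBernoulliProduct p μ →
      μ {σ | HasInfiniteCluster σ} = 0}

end Percolation

section SiteRC

variable {d : ℕ}

/-- The cluster of `x` among the `1`'s of `η` inside `Λ`. -/
def clusterIn (Λ : Finset (Site d)) (η : Site d → Bool) (x : Site d) : Set (Site d) :=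
  {y | Relation.ReflTransGen
    (fun u v => u ∈ Λ ∧ v ∈ Λ ∧ η u = true ∧ η v = true ∧ adj u v) x y}

/-- `κ_Λ(η)`: number of connected components of `1`'s of `η` in `Λ` not meeting the
inner boundary of `Λ`. -/
noncomputable def kappa (Λ : Finset (Site d)) (η : Site d → Bool) : ℕ :=
  Set.ncard {C : Set (Site d) | ∃ x ∈ Λ, η x = true ∧ C = clusterIn Λ η x ∧
    ∀ z ∈ C, z ∉ innerBdry Λ}

/-- The (unnormalized) wired site random-cluster weight. -/
noncomputable def psiWeight (p q : ℝ) (Λ : Finset (Site d)) (η : Site d → Bool) : ℝ :=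
  (p / (1 - p)) ^ (Λ.filter fun x => η x = true).card * q ^ kappa Λ η

/-- Extend a `{0,1}`-configuration on `Λ` by `0` outside. -/
def patchB (Λ : Finset (Site d)) (η : {x // x ∈ Λ} → Bool) : Site d → Bool :=
  fun x => if h : x ∈ Λ then η ⟨x, h⟩ else false

/-- Conditional probability of an event under the wired site random-cluster measure
`ψ^{(1)}_{p,q,Λ}`, given the values `τ` on `Δ`. -/
noncomputable def psiCond (p q : ℝ) (Λ : Finset (Site d))
    (Ev : (Site d → Bool) → Prop) (Δ : Finset (Site d)) (τ : Site d → Bool) : ℝ :=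
  (∑ η : {x // x ∈ Λ} → Bool,
      if Ev (patchB Λ η) ∧ ∀ x ∈ Δ, patchB Λ η x = τ x
      then psiWeight p q Λ (patchB Λ η) else 0) /
    ∑ η : {x // x ∈ Λ} → Bool,
      if ∀ x ∈ Δ, patchB Λ η x = τ x then psiWeight p q Λ (patchB Λ η) else 0

end SiteRC


section Models

/-- Potts constraints: none. -/
def pottsE (q : ℕ) : Fin 2 → Set (Fin q × Fin q) := fun _ => ∅

/-- Potts single-site interaction: zero. -/
def pottsPhi0 (q : ℕ) : Fin q → ℝ := fun _ => 0

/-- Potts bond interaction: `-β` on agreeing endpoints, `0` otherwise. -/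
noncomputable def pottsPhi1 (q : ℕ) (β : ℝ) : Fin 2 → Fin q → Fin q → ℝ :=
  fun _ a b => if a = b then -β else 0

/-- The distinguished Potts colour `q`. -/
def qcol (q : ℕ) (hq : 0 < q) : Fin q := ⟨q - 1, by omega⟩

/-- The monochromatic Potts point `ω_q`. -/
def omegaPotts (q : ℕ) (hq : 0 < q) : Site 2 → Fin q := fun _ => qcol q hq

/-- Widom-Rowlinson constraints: adjacent distinct nonzero symbols are forbidden. -/
def wrE (q : ℕ) : Fin 2 → Set (Fin (q + 1) × Fin (q + 1)) :=
  fun _ => {ab | ab.1 ≠ 0 ∧ ab.2 ≠ 0 ∧ ab.1 ≠ ab.2}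

/-- Widom-Rowlinson single-site interaction: `-log λ` on particles. -/
noncomputable def wrPhi0 (q : ℕ) (lam : ℝ) : Fin (q + 1) → ℝ :=
  fun a => if a = 0 then 0 else -Real.log lam

/-- Widom-Rowlinson bond interaction: zero. -/
def wrPhi1 (q : ℕ) : Fin 2 → Fin (q + 1) → Fin (q + 1) → ℝ := fun _ _ _ => 0

/-- The monochromatic Widom-Rowlinson point `ω_q`. -/
def omegaWR (q : ℕ) : Site 2 → Fin (q + 1) := fun _ => Fin.last q

/-- Hard-core constraints: adjacent `1`'s are forbidden. -/
def hcE : Fin 2 → Set (Bool × Bool) := fun _ => {(true, true)}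

/-- Hard-core single-site interaction: `-log γ` on particles. -/
noncomputable def hcPhi0 (γ : ℝ) : Bool → ℝ := fun b => if b then -Real.log γ else 0

/-- Hard-core bond interaction: zero. -/
def hcPhi1 : Fin 2 → Bool → Bool → ℝ := fun _ _ _ => 0

/-- The odd checkerboard point `ω^{(o)}`. -/
def omegaOdd : Site 2 → Bool := fun x => decide (Odd (x 0 + x 1))

end Models


section Aux

/-- Path relation inside a set `T`. -/
def srel (T : Set (Site 2)) (u v : Site 2) : Prop := u ∈ T ∧ v ∈ T ∧ adj u v

lemma adj_symm' {x y : Site 2} (h : adj x y) : adj y x := by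
  unfold adj at *
  rw [Fin.sum_univ_two] at *
  omega

lemma srel_path_symm {T : Set (Site 2)} {a b : Site 2}
    (h : Relation.ReflTransGen (srel T) a b) :
    Relation.ReflTransGen (srel T) b a := by
  induction h with
  | refl => exact .refl
  | tail _ step ih =>
      exact Relation.ReflTransGen.head ⟨step.2.1, step.1, adj_symm' step.2.2⟩ ih

lemma mem_starClosure_self {Θ : Finset (Site 2)} {x : Site 2} (hx : x ∈ Θ) :
    x ∈ starClosureF Θ := Finset.mem_union_left _ hx

lemma mem_starClosure_add {Θ : Finset (Site 2)} {x : Site 2} (hx : x ∈ Θ)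
    (e : Site 2) (he : ∀ i, (e i).natAbs ≤ 1) : x + e ∈ starClosureF Θ := by
  by_cases h0 : e = 0
  · subst h0; simpa using mem_starClosure_self hx
  · apply Finset.mem_union_right
    refine Finset.mem_biUnion.2 ⟨x, hx, ?_⟩
    refine Finset.mem_image.2 ⟨e, ?_, rfl⟩
    refine Finset.mem_erase.2 ⟨h0, Finset.mem_Icc.2 ⟨?_, ?_⟩⟩ <;>
      refine Pi.le_def.2 fun i => ?_ <;> have := he i <;> omega

lemma path_add {Θ : Finset (Site 2)} {x : Site 2} (hx : x ∈ Θ)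
    (e : Site 2) (he : ∀ i, (e i).natAbs ≤ 1) :
    Relation.ReflTransGen (srel (↑(starClosureF Θ))) x (x + e) := by
  set e0 : Site 2 := fun i => if i = 0 then e 0 else 0 with he0
  have he0b : ∀ i, (e0 i).natAbs ≤ 1 := by
    intro i; fin_cases i <;> simp [he0] ; exact he 0
  have hm : x + e0 ∈ starClosureF Θ := mem_starClosure_add hx e0 he0b
  have hxc : x ∈ starClosureF Θ := mem_starClosure_self hx
  have hec : x + e ∈ starClosureF Θ := mem_starClosure_add hx e he
  have h1 : Relation.ReflTransGen (srel (↑(starClosureF Θ))) x (x + e0) := by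
    by_cases h : e 0 = 0
    · have hxx : x + e0 = x := by
        funext i; fin_cases i <;> simp [he0, h]
      rw [hxx]
    · refine Relation.ReflTransGen.single ⟨hxc, hm, ?_⟩
      unfold adj
      rw [Fin.sum_univ_two]
      have h0 := he 0
      simp only [Pi.add_apply, he0]
      norm_num
      omega
  have h2 : Relation.ReflTransGen (srel (↑(starClosureF Θ))) (x + e0) (x + e) := by
    by_cases h : e 1 = 0
    · have hxx : x + e = x + e0 := by
        funext i; fin_cases i <;> simp [he0, h]
      rw [hxx]
    · refine Relation.ReflTransGen.single ⟨hm, hec, ?_⟩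
      unfold adj
      rw [Fin.sum_univ_two]
      have h1' := he 1
      simp only [Pi.add_apply, he0]
      norm_num
      omega
  exact h1.trans h2

lemma star_path {Θ : Finset (Site 2)} {x y : Site 2} (hx : x ∈ Θ) (hy : y ∈ Θ)
    (h : starAdj x y) :
    Relation.ReflTransGen (srel (↑(starClosureF Θ))) x y := by
  have hp := path_add hx (y - x) (fun i => by
    have := h.2 i
    simp only [Pi.sub_apply]
    omega)
  simpa [add_sub_cancel] using hp

lemma path_to_core {Θ : Finset (Site 2)} {a : Site 2} (ha : a ∈ starClosureF Θ) :
    ∃ x ∈ Θ, Relation.ReflTransGen (srel (↑(starClosureF Θ))) x a := by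
  rcases Finset.mem_union.1 ha with h | h
  · exact ⟨a, h, .refl⟩
  · rcases Finset.mem_biUnion.1 h with ⟨x, hx, hmem⟩
    rcases Finset.mem_image.1 hmem with ⟨e, he, rfl⟩
    have hb := Finset.mem_Icc.1 (Finset.mem_erase.1 he).2
    exact ⟨x, hx, path_add hx e (fun i => by
      have h1 := Pi.le_def.1 hb.1 i
      have h2 := Pi.le_def.1 hb.2 i
      omega)⟩

lemma starClosure_connected {Θ : Finset (Site 2)}
    (hΘ : StarConnectedSet (↑Θ : Set (Site 2))) {a b : Site 2}
    (ha : a ∈ starClosureF Θ) (hb : b ∈ starClosureF Θ) :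
    Relation.ReflTransGen (srel (↑(starClosureF Θ))) a b := by
  obtain ⟨x, hx, hxa⟩ := path_to_core ha
  obtain ⟨y, hy, hyb⟩ := path_to_core hb
  have h := hΘ x (by exact_mod_cast hx) y (by exact_mod_cast hy)
  clear hx hy ha hb
  have hxy : Relation.ReflTransGen (srel (↑(starClosureF Θ))) x y := by
    clear hyb
    induction h with
    | refl => exact .refl
    | tail _ step ih =>
        exact ih.trans (star_path (by exact_mod_cast step.1)
          (by exact_mod_cast step.2.1) step.2.2)
  exact (srel_path_symm hxa).trans (hxy.trans hyb)

end Aux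

/-- Remark 5.6: if `Λᶜ` is connected, `Θ` is `⋆`-connected and
`Θ̄⋆` meets the inner boundary of `Λ`, then `Λᶜ ∪ Θ̄⋆` is connected. -/
theorem complement_union_star_closure_connected
    (Θ Λ : Finset (Site 2)) (hne : Θ.Nonempty) (hsub : Θ ⊆ Λ)
    (hΛc : ConnectedSet ((↑Λ)ᶜ : Set (Site 2)))
    (hΘ : StarConnectedSet (↑Θ : Set (Site 2)))
    (hmeet : ∃ x ∈ starClosureF Θ, x ∈ innerBdry Λ) :
    ConnectedSet (((Λ : Set (Site 2))ᶜ) ∪ (starClosureF Θ : Set (Site 2))) := by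
  obtain ⟨x0, hx0c, hx0i⟩ := hmeet
  have hfil := Finset.mem_filter.1 hx0i
  obtain ⟨y0, hadj, hy0⟩ := hfil.2
  set S : Set (Site 2) := ((Λ : Set (Site 2))ᶜ) ∪ (starClosureF Θ : Set (Site 2)) with hS
  have hsubT : (↑(starClosureF Θ) : Set (Site 2)) ⊆ S := fun z hz => Or.inr hz
  have hsubC : ((Λ : Set (Site 2))ᶜ) ⊆ S := fun z hz => Or.inl hz
  have hx0S : x0 ∈ S := hsubT (by exact_mod_cast hx0c)
  have hy0S : y0 ∈ S := hsubC (by simpa using hy0)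
  have hub : ∀ a ∈ S, Relation.ReflTransGen (srel S) a x0 := by
    intro a ha
    rcases ha with ha | ha
    · have hpath := hΛc a ha y0 (by simpa using hy0)
      have h1 : Relation.ReflTransGen (srel S) a y0 :=
        Relation.ReflTransGen.mono (r := fun u v => u ∈ ((Λ : Set (Site 2))ᶜ) ∧ v ∈ ((Λ : Set (Site 2))ᶜ) ∧ adj u v) (p := srel S) (fun u v h => ⟨hsubC h.1, hsubC h.2.1, h.2.2⟩) _ _ hpath
      exact h1.trans (Relation.ReflTransGen.single ⟨hy0S, hx0S, adj_symm' hadj⟩)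
    · have hpath := starClosure_connected hΘ (by exact_mod_cast ha) hx0c
      exact Relation.ReflTransGen.mono (r := srel (↑(starClosureF Θ))) (p := srel S) (fun u v h => ⟨hsubT h.1, hsubT h.2.1, h.2.2⟩) _ _ hpath
  intro a ha b hb
  exact (hub a ha).trans (srel_path_symm (hub b hb))
end Paper
end

section
/- Let π be a Gibbs specification for a nearest-neighbour interaction Φ and constraints ℰ on ℤ^d that satisfies exponential strong spatial mixing with constants C, α > 0 (for all finite sets). Then for all n ∈ ℕ, all y,z ≥ (n,…,n) coordinatewise, all a ∈ 𝒜, and all ω₁, ω₂ ∈ Ω(ℰ) with ω₁(𝒫) = ω₂(𝒫), one has |π^{ω₁}_{S_n}(θ(0) = a) − π^{ω₂}_{S_{y,z}}(θ(0) = a)| ≤ C e^{−αn}. -/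
open scoped Classical
open Filter MeasureTheory

namespace Paper

section SSMProofAux
set_option linter.unusedSectionVars false
set_option linter.unusedVariables false
variable {d : ℕ} {A : Type} [Fintype A] [DecidableEq A]

lemma mem_closureF {Λ : Finset (Site d)} {x : Site d} (hx : x ∈ Λ) : x ∈ closureF Λ :=
  Finset.mem_union_left _ hx

lemma add_mem_closureF {Λ : Finset (Site d)} {x : Site d} (hx : x ∈ Λ) (i : Fin d) :
    x + ee d i ∈ closureF Λ := by
  refine Finset.mem_union_right _ ?_
  refine Finset.mem_biUnion.2 ⟨i, Finset.mem_univ _, ?_⟩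
  exact Finset.mem_union_left _ (Finset.mem_image.2 ⟨x, hx, rfl⟩)

lemma mem_closureF_of_add_mem {Λ : Finset (Site d)} {x : Site d} {i : Fin d}
    (hx : x + ee d i ∈ Λ) : x ∈ closureF Λ := by
  refine Finset.mem_union_right _ ?_
  refine Finset.mem_biUnion.2 ⟨i, Finset.mem_univ _, ?_⟩
  refine Finset.mem_union_right _ (Finset.mem_image.2 ⟨x + ee d i, hx, ?_⟩)
  abel

lemma closureF_mono {Λ Δ : Finset (Site d)} (h : Λ ⊆ Δ) : closureF Λ ⊆ closureF Δ := by
  intro x hx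
  rcases Finset.mem_union.1 hx with h1 | h1
  · exact mem_closureF (h h1)
  · rcases Finset.mem_biUnion.1 h1 with ⟨i, -, hi⟩
    rcases Finset.mem_union.1 hi with h2 | h2
    · rcases Finset.mem_image.1 h2 with ⟨s, hs, rfl⟩
      exact add_mem_closureF (h hs) i
    · rcases Finset.mem_image.1 h2 with ⟨s, hs, rfl⟩
      have : s - ee d i + ee d i ∈ Δ := by simpa [sub_add_cancel] using h hs
      exact mem_closureF_of_add_mem this

lemma bWeight_nonneg (E : Fin d → Set (A × A)) (Φ₀ : A → ℝ) (Φ₁ : Fin d → A → A → ℝ)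
    (Λ : Finset (Site d)) (ω : Site d → A) (θ : {x // x ∈ Λ} → A) :
    0 ≤ bWeight E Φ₀ Φ₁ Λ ω θ := by
  unfold bWeight; split <;> positivity

lemma FeasibleOn.mono {E : Fin d → Set (A × A)} {S T : Set (Site d)} {σ : Site d → A}
    (h : FeasibleOn E S σ) (hTS : T ⊆ S) : FeasibleOn E T σ :=
  fun x hx i hxi => h x (hTS hx) i (hTS hxi)

lemma patch_self (Λ : Finset (Site d)) (ω : Site d → A) :
    patch Λ (fun x => ω x.1) ω = ω := by
  funext x; unfold patch; split <;> rfl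

lemma Zsum_pos (E : Fin d → Set (A × A)) (Φ₀ : A → ℝ) (Φ₁ : Fin d → A → A → ℝ)
    (Λ : Finset (Site d)) {ω : Site d → A} (hω : ω ∈ Omega E) :
    0 < ∑ θ : {x // x ∈ Λ} → A, bWeight E Φ₀ Φ₁ Λ ω θ := by
  have h1 : ∀ θ : {x // x ∈ Λ} → A, 0 ≤ bWeight E Φ₀ Φ₁ Λ ω θ :=
    bWeight_nonneg E Φ₀ Φ₁ Λ ω
  refine Finset.sum_pos' (fun θ _ => h1 θ) ⟨fun x => ω x.1, Finset.mem_univ _, ?_⟩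
  rw [bWeight, patch_self]
  rw [if_pos (hω.mono (Set.subset_univ _))]
  positivity

lemma patch_mem_omega {E : Fin d → Set (A × A)} {Λ : Finset (Site d)} {ω : Site d → A}
    {θ : {x // x ∈ Λ} → A} (hω : ω ∈ Omega E)
    (hfeas : FeasibleOn E (↑(closureF Λ)) (patch Λ θ ω)) : patch Λ θ ω ∈ Omega E := by
  intro x _ i _
  by_cases hx : x ∈ Λ
  · exact hfeas x (Finset.mem_coe.2 (mem_closureF hx)) i
      (Finset.mem_coe.2 (add_mem_closureF hx i))
  · by_cases hxi : x + ee d i ∈ Λ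
    · exact hfeas x (Finset.mem_coe.2 (mem_closureF_of_add_mem hxi)) i
        (Finset.mem_coe.2 (mem_closureF hxi))
    · have e1 : patch Λ θ ω x = ω x := dif_neg hx
      have e2 : patch Λ θ ω (x + ee d i) = ω (x + ee d i) := dif_neg hxi
      rw [e1, e2]
      exact hω x (Set.mem_univ _) i (Set.mem_univ _)


lemma patch_congr_off {Λ : Finset (Site d)} {ω ω' : Site d → A}
    (h : ∀ x, x ∉ Λ → ω x = ω' x) (θ : {x // x ∈ Λ} → A) :
    patch Λ θ ω = patch Λ θ ω' := by
  funext x; unfold patch; split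
  · rfl
  · exact h x (by assumption)

lemma piProb_congr_off (E : Fin d → Set (A × A)) (Φ₀ : A → ℝ) (Φ₁ : Fin d → A → A → ℝ)
    (Λ : Finset (Site d)) {ω ω' : Site d → A} (h : ∀ x, x ∉ Λ → ω x = ω' x)
    (Ev : (Site d → A) → Prop) :
    piProb E Φ₀ Φ₁ Λ ω Ev = piProb E Φ₀ Φ₁ Λ ω' Ev := by
  unfold piProb bWeight
  simp only [patch_congr_off h]

lemma piProb_event_congr (E : Fin d → Set (A × A)) (Φ₀ : A → ℝ) (Φ₁ : Fin d → A → A → ℝ)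
    (Λ : Finset (Site d)) (ω : Site d → A) {Ev Ev' : (Site d → A) → Prop}
    (h : ∀ σ, Ev σ ↔ Ev' σ) :
    piProb E Φ₀ Φ₁ Λ ω Ev = piProb E Φ₀ Φ₁ Λ ω Ev' := by
  unfold piProb
  congr 1
  refine Finset.sum_congr rfl fun θ _ => ?_
  exact if_congr (h _) rfl rfl

lemma FeasibleOn_congr {E : Fin d → Set (A × A)} {S : Set (Site d)} {σ σ' : Site d → A}
    (h : ∀ x ∈ S, σ x = σ' x) : FeasibleOn E S σ ↔ FeasibleOn E S σ' := by
  constructor <;> intro hf x hx i hxi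
  · rw [← h x hx, ← h _ hxi]; exact hf x hx i hxi
  · rw [h x hx, h _ hxi]; exact hf x hx i hxi

lemma energy_congr {Φ₀ : A → ℝ} {Φ₁ : Fin d → A → A → ℝ} {S : Finset (Site d)}
    {σ σ' : Site d → A} (h : ∀ x ∈ S, σ x = σ' x) :
    energy Φ₀ Φ₁ S σ = energy Φ₀ Φ₁ S σ' := by
  unfold energy
  congr 1
  · exact Finset.sum_congr rfl fun x hx => by rw [h x hx]
  · refine Finset.sum_congr rfl fun i _ => Finset.sum_congr rfl fun x hx => ?_
    rcases Finset.mem_filter.1 hx with ⟨hx1, hx2⟩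
    rw [h x hx1, h _ hx2]

lemma bWeight_congr_bdry {E : Fin d → Set (A × A)} {Φ₀ : A → ℝ} {Φ₁ : Fin d → A → A → ℝ}
    {Λ : Finset (Site d)} {ω ω' : Site d → A} (h : ∀ x ∈ bdry Λ, ω x = ω' x)
    (θ : {x // x ∈ Λ} → A) :
    bWeight E Φ₀ Φ₁ Λ ω θ = bWeight E Φ₀ Φ₁ Λ ω' θ := by
  have hp : ∀ x ∈ closureF Λ, patch Λ θ ω x = patch Λ θ ω' x := by
    intro x hx
    unfold patch; split
    · rfl
    · exact h x (Finset.mem_sdiff.2 ⟨hx, by assumption⟩)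
  unfold bWeight
  rw [if_congr (FeasibleOn_congr fun x hx => hp x (Finset.mem_coe.1 hx))
    (by rw [energy_congr hp]) rfl]

lemma piProb_congr_bdry (E : Fin d → Set (A × A)) (Φ₀ : A → ℝ) (Φ₁ : Fin d → A → A → ℝ)
    (Λ : Finset (Site d)) {ω ω' : Site d → A} (h : ∀ x ∈ bdry Λ, ω x = ω' x)
    {Ev : (Site d → A) → Prop}
    (hEv : ∀ θ : {x // x ∈ Λ} → A, Ev (patch Λ θ ω) ↔ Ev (patch Λ θ ω')) :
    piProb E Φ₀ Φ₁ Λ ω Ev = piProb E Φ₀ Φ₁ Λ ω' Ev := by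
  unfold piProb
  congr 1
  · exact Finset.sum_congr rfl fun θ _ =>
      if_congr (hEv θ) (bWeight_congr_bdry h θ) rfl
  · exact Finset.sum_congr rfl fun θ _ => bWeight_congr_bdry h θ

def glueC {Λ Δ : Finset (Site d)} (hsub : Λ ⊆ Δ) (θ₁ : {x // x ∈ Λ} → A)
    (θ₂ : {x // x ∈ Δ \ Λ} → A) : {x // x ∈ Δ} → A :=
  fun x => if h : (x : Site d) ∈ Λ then θ₁ ⟨x, h⟩
    else θ₂ ⟨x, Finset.mem_sdiff.2 ⟨x.2, h⟩⟩

noncomputable def glueEquiv {Λ Δ : Finset (Site d)} (hsub : Λ ⊆ Δ) :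
    (({x // x ∈ Δ \ Λ} → A) × ({x // x ∈ Λ} → A)) ≃ ({x // x ∈ Δ} → A) where
  toFun p := glueC hsub p.2 p.1
  invFun θ := (fun x => θ ⟨x.1, (Finset.mem_sdiff.1 x.2).1⟩, fun x => θ ⟨x.1, hsub x.2⟩)
  left_inv p := by
    ext x
    · have hx : (x : Site d) ∉ Λ := (Finset.mem_sdiff.1 x.2).2
      simp only [glueC, dif_neg hx, Subtype.coe_eta]
    · simp only [glueC, dif_pos x.2, Subtype.coe_eta]
  right_inv θ := by
    funext x
    by_cases h : (x : Site d) ∈ Λ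
    · simp only [glueC, dif_pos h, Subtype.coe_eta]
    · simp only [glueC, dif_neg h, Subtype.coe_eta]

lemma sum_glue {Λ Δ : Finset (Site d)} (hsub : Λ ⊆ Δ) (f : ({x // x ∈ Δ} → A) → ℝ) :
    ∑ θ : {x // x ∈ Δ} → A, f θ =
      ∑ θ₂ : {x // x ∈ Δ \ Λ} → A, ∑ θ₁ : {x // x ∈ Λ} → A, f (glueC hsub θ₁ θ₂) := by
  have h1 : ∑ θ : {x // x ∈ Δ} → A, f θ =
      ∑ p : ({x // x ∈ Δ \ Λ} → A) × ({x // x ∈ Λ} → A), f (glueEquiv hsub p) :=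
    (Fintype.sum_equiv (glueEquiv hsub) (fun p => f (glueEquiv hsub p)) f
      (fun _ => rfl)).symm
  rw [h1, Fintype.sum_prod_type]
  rfl

def Wfun (Δ Λ : Finset (Site d)) (ω : Site d → A) (θ₂ : {x // x ∈ Δ \ Λ} → A) :
    Site d → A :=
  fun x => if h : x ∈ Δ \ Λ then θ₂ ⟨x, h⟩ else ω x

lemma patch_glue {Λ Δ : Finset (Site d)} (hsub : Λ ⊆ Δ) (ω : Site d → A)
    (θ₁ : {x // x ∈ Λ} → A) (θ₂ : {x // x ∈ Δ \ Λ} → A) :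
    patch Δ (glueC hsub θ₁ θ₂) ω = patch Λ θ₁ (Wfun Δ Λ ω θ₂) := by
  funext x
  by_cases hΛ : x ∈ Λ
  · have hΔ : x ∈ Δ := hsub hΛ
    simp only [patch, glueC, dif_pos hΔ, dif_pos hΛ]
  · by_cases hΔ : x ∈ Δ
    · have hdd : x ∈ Δ \ Λ := Finset.mem_sdiff.2 ⟨hΔ, hΛ⟩
      simp only [patch, glueC, Wfun, dif_pos hΔ, dif_neg hΛ, dif_pos hdd]
    · have hdd : x ∉ Δ \ Λ := fun h => hΔ (Finset.mem_sdiff.1 h).1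
      simp only [patch, Wfun, dif_neg hΛ, dif_neg hΔ, dif_neg hdd]

lemma patch_off {Λ : Finset (Site d)} (θ : {x // x ∈ Λ} → A) (ω : Site d → A)
    {x : Site d} (hx : x ∉ Λ) : patch Λ θ ω x = ω x := dif_neg hx

noncomputable def restEnergy (Φ₀ : A → ℝ) (Φ₁ : Fin d → A → A → ℝ)
    (T S : Finset (Site d)) (σ : Site d → A) : ℝ :=
  (∑ x ∈ S \ T, Φ₀ (σ x)) +
    ∑ i : Fin d, ∑ x ∈ (S.filter fun x => x + ee d i ∈ S) \
      (T.filter fun x => x + ee d i ∈ T), Φ₁ i (σ x) (σ (x + ee d i))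

lemma energy_split {Φ₀ : A → ℝ} {Φ₁ : Fin d → A → A → ℝ} {T S : Finset (Site d)}
    (hTS : T ⊆ S) (σ : Site d → A) :
    energy Φ₀ Φ₁ S σ = energy Φ₀ Φ₁ T σ + restEnergy Φ₀ Φ₁ T S σ := by
  unfold energy restEnergy
  have h0 : ∑ x ∈ S, Φ₀ (σ x) = (∑ x ∈ S \ T, Φ₀ (σ x)) + ∑ x ∈ T, Φ₀ (σ x) :=
    (Finset.sum_sdiff hTS).symm
  have h1 : ∀ i : Fin d, (T.filter fun x => x + ee d i ∈ T) ⊆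
      (S.filter fun x => x + ee d i ∈ S) := by
    intro i x hx
    rcases Finset.mem_filter.1 hx with ⟨h2, h3⟩
    exact Finset.mem_filter.2 ⟨hTS h2, hTS h3⟩
  have h2 : ∑ i : Fin d, ∑ x ∈ S.filter (fun x => x + ee d i ∈ S),
        Φ₁ i (σ x) (σ (x + ee d i)) =
      ∑ i : Fin d, ((∑ x ∈ (S.filter fun x => x + ee d i ∈ S) \
          (T.filter fun x => x + ee d i ∈ T), Φ₁ i (σ x) (σ (x + ee d i))) +
        ∑ x ∈ T.filter (fun x => x + ee d i ∈ T), Φ₁ i (σ x) (σ (x + ee d i))) :=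
    Finset.sum_congr rfl fun i _ => (Finset.sum_sdiff (h1 i)).symm
  rw [h0, h2, Finset.sum_add_distrib]
  ring

def Gfeas (E : Fin d → Set (A × A)) (Λ Δ : Finset (Site d)) (σ : Site d → A) : Prop :=
  ∀ x ∈ closureF Δ, x ∉ Λ → ∀ i : Fin d, x + ee d i ∈ closureF Δ →
    x + ee d i ∉ Λ → (σ x, σ (x + ee d i)) ∉ E i

lemma feas_split {E : Fin d → Set (A × A)} {Λ Δ : Finset (Site d)} (hsub : Λ ⊆ Δ)
    (σ : Site d → A) :
    FeasibleOn E (↑(closureF Δ)) σ ↔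
      (FeasibleOn E (↑(closureF Λ)) σ ∧ Gfeas E Λ Δ σ) := by
  constructor
  · intro h
    refine ⟨h.mono ?_, fun x hx _ i hxi _ => h x hx i hxi⟩
    exact fun x hx => Finset.mem_coe.2 (closureF_mono hsub (Finset.mem_coe.1 hx))
  · rintro ⟨h1, h2⟩ x hx i hxi
    by_cases hxΛ : x ∈ Λ
    · exact h1 x (Finset.mem_coe.2 (mem_closureF hxΛ)) i
        (Finset.mem_coe.2 (add_mem_closureF hxΛ i))
    · by_cases hxiΛ : x + ee d i ∈ Λ
      · exact h1 x (Finset.mem_coe.2 (mem_closureF_of_add_mem hxiΛ)) i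
          (Finset.mem_coe.2 (mem_closureF hxiΛ))
      · exact h2 x hx hxΛ i hxi hxiΛ

lemma Gfeas_congr {E : Fin d → Set (A × A)} {Λ Δ : Finset (Site d)} {σ σ' : Site d → A}
    (h : ∀ x, x ∉ Λ → σ x = σ' x) : Gfeas E Λ Δ σ ↔ Gfeas E Λ Δ σ' := by
  constructor <;> intro hg x hx h1 i hxi h2
  · rw [← h x h1, ← h _ h2]; exact hg x hx h1 i hxi h2
  · rw [h x h1, h _ h2]; exact hg x hx h1 i hxi h2

lemma filter_diff_not_mem {Λ Δ : Finset (Site d)} {i : Fin d} {x : Site d}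
    (hx : x ∈ ((closureF Δ).filter fun x => x + ee d i ∈ closureF Δ) \
      ((closureF Λ).filter fun x => x + ee d i ∈ closureF Λ)) :
    x ∉ Λ ∧ x + ee d i ∉ Λ := by
  rcases Finset.mem_sdiff.1 hx with ⟨-, hT⟩
  constructor
  · intro hxΛ
    exact hT (Finset.mem_filter.2 ⟨mem_closureF hxΛ, add_mem_closureF hxΛ i⟩)
  · intro hxiΛ
    exact hT (Finset.mem_filter.2 ⟨mem_closureF_of_add_mem hxiΛ, mem_closureF hxiΛ⟩)

lemma restEnergy_congr {Φ₀ : A → ℝ} {Φ₁ : Fin d → A → A → ℝ} {Λ Δ : Finset (Site d)}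
    {σ σ' : Site d → A} (h : ∀ x, x ∉ Λ → σ x = σ' x) :
    restEnergy Φ₀ Φ₁ (closureF Λ) (closureF Δ) σ =
      restEnergy Φ₀ Φ₁ (closureF Λ) (closureF Δ) σ' := by
  unfold restEnergy
  congr 1
  · refine Finset.sum_congr rfl fun x hx => ?_
    have hxΛ : x ∉ Λ := fun hc => (Finset.mem_sdiff.1 hx).2 (mem_closureF hc)
    rw [h x hxΛ]
  · refine Finset.sum_congr rfl fun i _ => Finset.sum_congr rfl fun x hx => ?_
    rcases filter_diff_not_mem hx with ⟨h1, h2⟩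
    rw [h x h1, h _ h2]

noncomputable def gfac (E : Fin d → Set (A × A)) (Φ₀ : A → ℝ) (Φ₁ : Fin d → A → A → ℝ)
    (Λ Δ : Finset (Site d)) (W : Site d → A) : ℝ :=
  if Gfeas E Λ Δ W then Real.exp (-(restEnergy Φ₀ Φ₁ (closureF Λ) (closureF Δ) W)) else 0

lemma gfac_nonneg (E : Fin d → Set (A × A)) (Φ₀ : A → ℝ) (Φ₁ : Fin d → A → A → ℝ)
    (Λ Δ : Finset (Site d)) (W : Site d → A) : 0 ≤ gfac E Φ₀ Φ₁ Λ Δ W := by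
  unfold gfac; split <;> positivity

lemma bWeight_glue {E : Fin d → Set (A × A)} {Φ₀ : A → ℝ} {Φ₁ : Fin d → A → A → ℝ}
    {Λ Δ : Finset (Site d)} (hsub : Λ ⊆ Δ) (ω : Site d → A)
    (θ₁ : {x // x ∈ Λ} → A) (θ₂ : {x // x ∈ Δ \ Λ} → A) :
    bWeight E Φ₀ Φ₁ Δ ω (glueC hsub θ₁ θ₂) =
      bWeight E Φ₀ Φ₁ Λ (Wfun Δ Λ ω θ₂) θ₁ * gfac E Φ₀ Φ₁ Λ Δ (Wfun Δ Λ ω θ₂) := by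
  have hoff : ∀ x, x ∉ Λ → patch Λ θ₁ (Wfun Δ Λ ω θ₂) x = Wfun Δ Λ ω θ₂ x :=
    fun x hx => patch_off θ₁ _ hx
  have key : FeasibleOn E (↑(closureF Δ)) (patch Λ θ₁ (Wfun Δ Λ ω θ₂)) ↔
      (FeasibleOn E (↑(closureF Λ)) (patch Λ θ₁ (Wfun Δ Λ ω θ₂)) ∧
        Gfeas E Λ Δ (Wfun Δ Λ ω θ₂)) :=
    (feas_split hsub _).trans (and_congr_right fun _ => Gfeas_congr hoff)
  have eeq : energy Φ₀ Φ₁ (closureF Δ) (patch Λ θ₁ (Wfun Δ Λ ω θ₂)) =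
      energy Φ₀ Φ₁ (closureF Λ) (patch Λ θ₁ (Wfun Δ Λ ω θ₂)) +
        restEnergy Φ₀ Φ₁ (closureF Λ) (closureF Δ) (Wfun Δ Λ ω θ₂) := by
    rw [energy_split (closureF_mono hsub), restEnergy_congr hoff]
  unfold bWeight gfac
  rw [patch_glue hsub ω θ₁ θ₂,
    if_congr key (by rw [eeq, neg_add, Real.exp_add]) rfl]
  split_ifs <;> simp_all

lemma ratio_bound {ι : Type} [Fintype ι] (u v : ι → ℝ) (p ε : ℝ)
    (h : ∀ j, (p - ε) * v j ≤ u j ∧ u j ≤ (p + ε) * v j)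
    (hv : 0 < ∑ j, v j) :
    |p - (∑ j, u j) / (∑ j, v j)| ≤ ε := by
  have h1 : (p - ε) * ∑ j, v j ≤ ∑ j, u j := by
    rw [Finset.mul_sum]
    exact Finset.sum_le_sum fun j _ => (h j).1
  have h2 : (∑ j, u j) ≤ (p + ε) * ∑ j, v j := by
    rw [Finset.mul_sum]
    exact Finset.sum_le_sum fun j _ => (h j).2
  have h3 : p - ε ≤ (∑ j, u j) / (∑ j, v j) := (le_div_iff₀ hv).2 h1
  have h4 : (∑ j, u j) / (∑ j, v j) ≤ p + ε := (div_le_iff₀ hv).2 h2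
  rw [abs_le]
  constructor <;> linarith

lemma term_bound {g Z N p ε : ℝ} (hg : 0 ≤ g) (hN : 0 ≤ N) (hNZ : N ≤ Z)
    (hmain : 0 < g → 0 < Z → |p - N / Z| ≤ ε) :
    (p - ε) * (g * Z) ≤ g * N ∧ g * N ≤ (p + ε) * (g * Z) := by
  rcases eq_or_lt_of_le hg with hg0 | hg0
  · rw [← hg0]; norm_num
  · rcases eq_or_lt_of_le (hN.trans hNZ) with hZ0 | hZ0
    · have hN0 : N = 0 := le_antisymm (hNZ.trans hZ0.symm.le) hN
      rw [← hZ0, hN0]; norm_num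
    · have h := hmain hg0 hZ0
      rw [abs_le] at h
      have e1 : N / Z * (g * Z) = g * N := by field_simp
      constructor <;> nlinarith [h.1, h.2, mul_pos hg0 hZ0]

lemma not_lexLt_zero_zero {d : ℕ} : ¬ lexLt (0 : Site d) 0 := by
  rintro ⟨i, -, hlt⟩
  exact lt_irrefl _ hlt

lemma zero_mem_SF (d n : ℕ) : (0 : Site d) ∈ SF d n := by
  refine Finset.mem_filter.2 ⟨?_, not_lexLt_zero_zero⟩
  refine Finset.mem_Icc.2 ⟨?_, ?_⟩ <;> intro i <;> simp

lemma SF_subset_SyzF {d n : ℕ} {y z : Site d} (hy : ∀ i, (n : ℤ) ≤ y i)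
    (hz : ∀ i, (n : ℤ) ≤ z i) : SF d n ⊆ SyzF y z := by
  intro x hx
  rcases Finset.mem_filter.1 hx with ⟨hbox, hlex⟩
  rcases Finset.mem_Icc.1 hbox with ⟨h1, h2⟩
  refine Finset.mem_filter.2 ⟨Finset.mem_Icc.2 ⟨?_, ?_⟩, hlex⟩
  · intro i
    have ha : -(n : ℤ) ≤ x i := h1 i
    have hb := hy i
    show -y i ≤ x i
    linarith
  · intro i
    have ha : x i ≤ (n : ℤ) := h2 i
    have hb := hz i
    show x i ≤ z i
    linarith

lemma dist1_ge_of_not_box {d n : ℕ} {x : Site d} (hx : x ∉ boxF d n) :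
    (n : ℝ) ≤ dist1 0 x := by
  have hnb : ¬ ((fun _ => -(n:ℤ)) ≤ x ∧ x ≤ fun _ => (n:ℤ)) := by
    intro h; exact hx (Finset.mem_Icc.2 h)
  have hj : ∃ j, n < (x j).natAbs := by
    by_contra hc
    push_neg at hc
    refine hnb ⟨fun j => ?_, fun j => ?_⟩
    · show -(n : ℤ) ≤ x j
      have := hc j
      omega
    · show x j ≤ (n : ℤ)
      have := hc j
      omega
  rcases hj with ⟨j, hj⟩
  have h1 : (n : ℝ) ≤ ((((0:Site d) j) - x j).natAbs : ℝ) := by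
    have h2 : ((0:Site d) j - x j).natAbs = (x j).natAbs := by
      simp [Int.natAbs_neg]
    rw [h2]
    exact_mod_cast hj.le
  unfold dist1
  calc (n : ℝ) ≤ ((((0:Site d) j) - x j).natAbs : ℝ) := h1
    _ ≤ ∑ i, ((((0:Site d) i) - x i).natAbs : ℝ) :=
      Finset.single_le_sum (f := fun i => ((((0:Site d) i) - x i).natAbs : ℝ))
        (fun i _ => by positivity) (Finset.mem_univ j)


lemma nested_bound (E : Fin d → Set (A × A)) (Φ₀ : A → ℝ) (Φ₁ : Fin d → A → A → ℝ)
    {Λ Δf : Finset (Site d)} (hsub : Λ ⊆ Δf) (h0 : (0 : Site d) ∈ Λ) (a : A)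
    {ω₂ : Site d → A} (hω₂ : ω₂ ∈ Omega E) {p ε : ℝ} (hε : 0 ≤ ε)
    (hkey : ∀ σs ∈ Omega E, (∀ x, x ∉ Δf → σs x = ω₂ x) →
      |p - piProb E Φ₀ Φ₁ Λ σs (fun σ => σ 0 = a)| ≤ ε) :
    |p - piProb E Φ₀ Φ₁ Δf ω₂ (fun σ => σ 0 = a)| ≤ ε := by
  classical
  set W : ({x // x ∈ Δf \ Λ} → A) → Site d → A := fun θ₂ => Wfun Δf Λ ω₂ θ₂ with hW
  set g : ({x // x ∈ Δf \ Λ} → A) → ℝ := fun θ₂ => gfac E Φ₀ Φ₁ Λ Δf (W θ₂) with hg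
  set NN : ({x // x ∈ Δf \ Λ} → A) → ℝ := fun θ₂ => ∑ θ₁ : {x // x ∈ Λ} → A,
    if (patch Λ θ₁ (W θ₂)) 0 = a then bWeight E Φ₀ Φ₁ Λ (W θ₂) θ₁ else 0 with hNN
  set ZZ : ({x // x ∈ Δf \ Λ} → A) → ℝ := fun θ₂ => ∑ θ₁ : {x // x ∈ Λ} → A,
    bWeight E Φ₀ Φ₁ Λ (W θ₂) θ₁ with hZZ
  -- per-fiber factorizations
  have hNg : ∀ θ₂, (∑ θ₁ : {x // x ∈ Λ} → A,
      if (patch Δf (glueC hsub θ₁ θ₂) ω₂) 0 = a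
      then bWeight E Φ₀ Φ₁ Δf ω₂ (glueC hsub θ₁ θ₂) else 0) = g θ₂ * NN θ₂ := by
    intro θ₂
    rw [hNN, Finset.mul_sum]
    refine Finset.sum_congr rfl fun θ₁ _ => ?_
    rw [bWeight_glue hsub ω₂ θ₁ θ₂, patch_glue hsub ω₂ θ₁ θ₂]
    split_ifs <;> ring
  have hZg : ∀ θ₂, (∑ θ₁ : {x // x ∈ Λ} → A,
      bWeight E Φ₀ Φ₁ Δf ω₂ (glueC hsub θ₁ θ₂)) = g θ₂ * ZZ θ₂ := by
    intro θ₂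
    rw [hZZ, Finset.mul_sum]
    refine Finset.sum_congr rfl fun θ₁ _ => ?_
    rw [bWeight_glue hsub ω₂ θ₁ θ₂]
    ring
  -- global factorization
  have hnum : (∑ θ : {x // x ∈ Δf} → A,
      if (patch Δf θ ω₂) 0 = a then bWeight E Φ₀ Φ₁ Δf ω₂ θ else 0) =
      ∑ θ₂, g θ₂ * NN θ₂ := by
    rw [sum_glue hsub]
    exact Finset.sum_congr rfl fun θ₂ _ => hNg θ₂
  have hden : (∑ θ : {x // x ∈ Δf} → A, bWeight E Φ₀ Φ₁ Δf ω₂ θ) =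
      ∑ θ₂, g θ₂ * ZZ θ₂ := by
    rw [sum_glue hsub]
    exact Finset.sum_congr rfl fun θ₂ _ => hZg θ₂
  have hfact : piProb E Φ₀ Φ₁ Δf ω₂ (fun σ => σ 0 = a) =
      (∑ θ₂, g θ₂ * NN θ₂) / (∑ θ₂, g θ₂ * ZZ θ₂) := by
    unfold piProb
    rw [← hnum, ← hden]
    congr 1
    exact Finset.sum_congr rfl fun θ _ => ite_congr rfl (fun _ => rfl) (fun _ => rfl)
  have hZpos : 0 < ∑ θ₂, g θ₂ * ZZ θ₂ := by
    rw [← hden]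
    exact Zsum_pos E Φ₀ Φ₁ Δf hω₂
  rw [hfact]
  refine ratio_bound _ _ p ε (fun θ₂ => ?_) hZpos
  refine term_bound (gfac_nonneg E Φ₀ Φ₁ Λ Δf (W θ₂)) ?_ ?_ ?_
  · exact Finset.sum_nonneg fun θ₁ _ => by
      split_ifs
      · exact bWeight_nonneg E Φ₀ Φ₁ Λ (W θ₂) θ₁
      · exact le_refl 0
  · refine Finset.sum_le_sum fun θ₁ _ => ?_
    split_ifs
    · exact le_refl _
    · exact bWeight_nonneg E Φ₀ Φ₁ Λ (W θ₂) θ₁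
  · -- main per-fiber estimate
    intro hgpos hZZpos
    have hex : ∃ θ₁ : {x // x ∈ Λ} → A, 0 < bWeight E Φ₀ Φ₁ Λ (W θ₂) θ₁ := by
      by_contra hc
      push_neg at hc
      have : ZZ θ₂ ≤ 0 := Finset.sum_nonpos fun θ₁ _ => hc θ₁
      linarith
    obtain ⟨θ₁, hθ₁⟩ := hex
    have hw : bWeight E Φ₀ Φ₁ Δf ω₂ (glueC hsub θ₁ θ₂) =
        bWeight E Φ₀ Φ₁ Λ (W θ₂) θ₁ * g θ₂ := bWeight_glue hsub ω₂ θ₁ θ₂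
    have hpos : 0 < bWeight E Φ₀ Φ₁ Δf ω₂ (glueC hsub θ₁ θ₂) := by
      rw [hw]; exact mul_pos hθ₁ hgpos
    have hfeasΔ : FeasibleOn E (↑(closureF Δf)) (patch Δf (glueC hsub θ₁ θ₂) ω₂) := by
      by_contra hc
      rw [bWeight, if_neg hc] at hpos
      exact lt_irrefl 0 hpos
    have hσs : patch Δf (glueC hsub θ₁ θ₂) ω₂ ∈ Omega E := patch_mem_omega hω₂ hfeasΔ
    have hoffσ : ∀ x, x ∉ Λ → patch Δf (glueC hsub θ₁ θ₂) ω₂ x = W θ₂ x := by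
      intro x hx
      rw [patch_glue hsub ω₂ θ₁ θ₂]
      exact patch_off _ _ hx
    have hoffΔ : ∀ x, x ∉ Δf → patch Δf (glueC hsub θ₁ θ₂) ω₂ x = ω₂ x :=
      fun x hx => patch_off _ _ hx
    have hπσ : piProb E Φ₀ Φ₁ Λ (patch Δf (glueC hsub θ₁ θ₂) ω₂) (fun σ => σ 0 = a) =
        NN θ₂ / ZZ θ₂ := by
      rw [piProb_congr_off E Φ₀ Φ₁ Λ hoffσ]
      unfold piProb
      simp only [hNN, hZZ]
      congr 1
      exact Finset.sum_congr rfl fun θ _ => ite_congr rfl (fun _ => rfl) (fun _ => rfl)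
    rw [← hπσ]
    exact hkey _ hσs hoffΔ

end SSMProofAux


/-- Proposition 7.4: exponential SSM of a specification implies the
half-plane exponential bound for configurations agreeing on the past. -/
theorem ssm_past_boundary_bound
    {d : ℕ} {A : Type} [Fintype A] [DecidableEq A]
    (E : Fin d → Set (A × A)) (Φ₀ : A → ℝ) (Φ₁ : Fin d → A → A → ℝ)
    (hΩ : (Omega E).Nonempty) (C α : ℝ) (hC : 0 < C) (hα : 0 < α)
    (hssm : ∀ (Δ Θ : Finset (Site d)), Θ ⊆ Δ → ∀ θ : Site d → A,
      ∀ ω₁ ∈ Omega E, ∀ ω₂ ∈ Omega E,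
        |piProb E Φ₀ Φ₁ Δ ω₁ (fun σ => ∀ x ∈ Θ, σ x = θ x) -
            piProb E Φ₀ Φ₁ Δ ω₂ (fun σ => ∀ x ∈ Θ, σ x = θ x)| ≤
          (Θ.card : ℝ) * C *
            Real.exp (-α * setDist Θ ((bdry Δ).filter fun x => ω₁ x ≠ ω₂ x))) :
    ∀ (n : ℕ) (y z : Site d), (∀ i, (n : ℤ) ≤ y i) → (∀ i, (n : ℤ) ≤ z i) →
      ∀ a : A, ∀ ω₁ ∈ Omega E, ∀ ω₂ ∈ Omega E,
        (∀ x : Site d, lexLt x 0 → ω₁ x = ω₂ x) →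
        |piProb E Φ₀ Φ₁ (SF d n) ω₁ (fun σ => σ 0 = a) -
            piProb E Φ₀ Φ₁ (SyzF y z) ω₂ (fun σ => σ 0 = a)| ≤ C * Real.exp (-α * n) := by
  intro n y z hy hz a ω₁ hω₁ ω₂ hω₂ hpast
  have hsub : SF d n ⊆ SyzF y z := SF_subset_SyzF hy hz
  have h0 : (0 : Site d) ∈ SF d n := zero_mem_SF d n
  have hε0 : (0:ℝ) ≤ C * Real.exp (-α * n) := by positivity
  refine nested_bound E Φ₀ Φ₁ hsub h0 a hω₂ hε0 ?_
  intro σs hσs hoff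
  by_cases hD : ((bdry (SF d n)).filter fun x => ω₁ x ≠ σs x) = ∅
  · have hbd : ∀ x ∈ bdry (SF d n), ω₁ x = σs x := by
      intro x hx
      by_contra hne
      have hmem : x ∈ (bdry (SF d n)).filter fun x => ω₁ x ≠ σs x :=
        Finset.mem_filter.2 ⟨hx, hne⟩
      rw [hD] at hmem
      exact absurd hmem (Finset.notMem_empty x)
    have hEv : ∀ θ : {x // x ∈ SF d n} → A,
        ((patch (SF d n) θ ω₁) 0 = a) ↔ ((patch (SF d n) θ σs) 0 = a) := by
      intro θ
      have e1 : patch (SF d n) θ ω₁ 0 = θ ⟨0, h0⟩ := dif_pos h0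
      have e2 : patch (SF d n) θ σs 0 = θ ⟨0, h0⟩ := dif_pos h0
      rw [e1, e2]
    rw [piProb_congr_bdry E Φ₀ Φ₁ (SF d n) hbd hEv, sub_self, abs_zero]
    exact hε0
  · have hssm' := hssm (SF d n) {0} (Finset.singleton_subset_iff.2 h0) (fun _ => a)
      ω₁ hω₁ σs hσs
    have hev1 : piProb E Φ₀ Φ₁ (SF d n) ω₁
        (fun σ => ∀ x ∈ ({0} : Finset (Site d)), σ x = a) =
        piProb E Φ₀ Φ₁ (SF d n) ω₁ (fun σ => σ 0 = a) :=
      piProb_event_congr E Φ₀ Φ₁ (SF d n) ω₁ (fun σ => by simp)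
    have hev2 : piProb E Φ₀ Φ₁ (SF d n) σs
        (fun σ => ∀ x ∈ ({0} : Finset (Site d)), σ x = a) =
        piProb E Φ₀ Φ₁ (SF d n) σs (fun σ => σ 0 = a) :=
      piProb_event_congr E Φ₀ Φ₁ (SF d n) σs (fun σ => by simp)
    rw [hev1, hev2] at hssm'
    simp only [Finset.card_singleton, Nat.cast_one, one_mul] at hssm'
    refine hssm'.trans ?_
    have hdist : (n : ℝ) ≤ setDist {0} ((bdry (SF d n)).filter fun x => ω₁ x ≠ σs x) := by
      apply le_csInf
      · obtain ⟨ys, hys⟩ := Finset.nonempty_iff_ne_empty.2 hD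
        exact ⟨dist1 0 ys, 0, Finset.mem_singleton_self 0, ys, hys, rfl⟩
      · rintro r ⟨x, hx, ys, hys, rfl⟩
        rw [Finset.mem_singleton] at hx
        subst hx
        rcases Finset.mem_filter.1 hys with ⟨hyb, hyne⟩
        have hyΛ : ys ∉ SF d n := (Finset.mem_sdiff.1 hyb).2
        have hylex : ¬ lexLt ys 0 := by
          intro hl
          apply hyne
          have hyΔ : ys ∉ SyzF y z := fun hc => (Finset.mem_filter.1 hc).2 hl
          rw [hoff ys hyΔ]
          exact hpast ys hl
        have hybox : ys ∉ boxF d n := fun hc => hyΛ (Finset.mem_filter.2 ⟨hc, hylex⟩)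
        exact dist1_ge_of_not_box hybox
    have hexp : -α * setDist {0} ((bdry (SF d n)).filter fun x => ω₁ x ≠ σs x) ≤
        -α * n := by nlinarith
    exact mul_le_mul_of_nonneg_left (Real.exp_le_exp.2 hexp) hC.le

end Paper
end

section
/- Let Φ be a nearest-neighbour interaction for a set of constraints ℰ on ℤ^d, with associated specification π and SFT Ω(ℰ). If Ω(ℰ) has a safe symbol, then c_π(ν) > 0 for every shift-invariant Borel probability measure ν with supp(ν) ⊆ Ω(ℰ). -/
open scoped Classical
open Filter MeasureTheory

namespace Paper

/-- `a` is a safe symbol for the constraints `E`. -/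
def SafeSymbol {d : ℕ} {A : Type} (E : Fin d → Set (A × A)) (a : A) : Prop :=
  ∀ (i : Fin d) (b : A), (a, b) ∉ E i ∧ (b, a) ∉ E i

section SafeAux
set_option linter.unusedSectionVars false

variable {d : ℕ} {A : Type} [Fintype A] [DecidableEq A]

lemma ee_ne_zero (d : ℕ) (i : Fin d) : ee d i ≠ 0 := by
  intro h
  have := congrFun h i
  simp [ee] at this

lemma neg_ee_ne_zero (d : ℕ) (i : Fin d) : -ee d i ≠ 0 := by
  intro h
  have : ee d i = 0 := by
    have h2 := congrArg Neg.neg h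
    simpa using h2
  exact ee_ne_zero d i this

/-- The neighbourhood `{0, ±e_i}` of the origin. -/
def NsetF (d : ℕ) : Finset (Site d) :=
  insert 0 (Finset.univ.biUnion fun i : Fin d => {ee d i, -ee d i})

lemma zero_mem_NsetF : (0 : Site d) ∈ NsetF d := Finset.mem_insert_self _ _

lemma ee_mem_NsetF (i : Fin d) : ee d i ∈ NsetF d :=
  Finset.mem_insert_of_mem (Finset.mem_biUnion.mpr ⟨i, Finset.mem_univ _, by simp⟩)

lemma neg_ee_mem_NsetF (i : Fin d) : -ee d i ∈ NsetF d :=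
  Finset.mem_insert_of_mem (Finset.mem_biUnion.mpr ⟨i, Finset.mem_univ _, by simp⟩)

lemma patch_of_not_mem {Λ : Finset (Site d)} {θ : {x // x ∈ Λ} → A} {ω : Site d → A}
    {z : Site d} (hz : z ∉ Λ) : patch Λ θ ω z = ω z := by
  simp [patch, hz]

lemma patch_of_mem {Λ : Finset (Site d)} {θ : {x // x ∈ Λ} → A} {ω : Site d → A}
    {z : Site d} (hz : z ∈ Λ) : patch Λ θ ω z = θ ⟨z, hz⟩ := by
  simp [patch, hz]

/-- The modification map `T`. -/
noncomputable def TmapF (Λ : Finset (Site d)) (ω : Site d → A) (a : A)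
    (θ : {x // x ∈ Λ} → A) : {x // x ∈ Λ} → A :=
  fun x => if (x : Site d) = 0 then ω 0 else if (x : Site d) ∈ NsetF d then a else θ x

lemma patch_Tmap_zero {Λ : Finset (Site d)} {ω : Site d → A} {a : A}
    {θ : {x // x ∈ Λ} → A} : patch Λ (TmapF Λ ω a θ) ω 0 = ω 0 := by
  by_cases h : (0 : Site d) ∈ Λ <;> simp [patch, TmapF, h]

lemma patch_Tmap_of_not_mem_N {Λ : Finset (Site d)} {ω : Site d → A} {a : A}
    {θ : {x // x ∈ Λ} → A} {z : Site d} (hz : z ∉ NsetF d) :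
    patch Λ (TmapF Λ ω a θ) ω z = patch Λ θ ω z := by
  have hz0 : z ≠ 0 := fun h => hz (h ▸ zero_mem_NsetF)
  by_cases h : z ∈ Λ <;> simp [patch, TmapF, h, hz0, hz]

lemma patch_Tmap_nbr {Λ : Finset (Site d)} {ω : Site d → A} {a : A}
    {θ : {x // x ∈ Λ} → A} {z : Site d} (hzΛ : z ∈ Λ) (hz0 : z ≠ 0)
    (hzN : z ∈ NsetF d) : patch Λ (TmapF Λ ω a θ) ω z = a := by
  simp [patch, TmapF, hzΛ, hz0, hzN]

lemma feasible_Tmap {E : Fin d → Set (A × A)} {a : A} (hsafe : SafeSymbol E a)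
    {ω : Site d → A} (hω : ω ∈ Omega E) (Λ : Finset (Site d)) (θ : {x // x ∈ Λ} → A)
    (hfeas : FeasibleOn E ↑(closureF Λ) (patch Λ θ ω)) :
    FeasibleOn E ↑(closureF Λ) (patch Λ (TmapF Λ ω a θ) ω) := by
  intro x hx i hxi
  have hsafe1 : ∀ b, (a, b) ∉ E i := fun b => (hsafe i b).1
  have hsafe2 : ∀ b, (b, a) ∉ E i := fun b => (hsafe i b).2
  have hωfeas : ∀ z : Site d, (ω z, ω (z + ee d i)) ∉ E i := fun z =>
    hω z (Set.mem_univ _) i (Set.mem_univ _)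
  by_cases hx0 : x = 0
  · subst hx0
    by_cases hyΛ : (0 : Site d) + ee d i ∈ Λ
    · have h2 : patch Λ (TmapF Λ ω a θ) ω (0 + ee d i) = a := by
        refine patch_Tmap_nbr hyΛ ?_ ?_
        · simpa using ee_ne_zero d i
        · simpa using ee_mem_NsetF i
      rw [patch_Tmap_zero, h2]
      exact hsafe2 _
    · have h2 : patch Λ (TmapF Λ ω a θ) ω (0 + ee d i) = ω (0 + ee d i) :=
        patch_of_not_mem hyΛ
      rw [patch_Tmap_zero, h2]
      exact hωfeas 0
  · by_cases hy0 : x + ee d i = 0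
    · have hxval : x = -ee d i := eq_neg_of_add_eq_zero_left hy0
      by_cases hxΛ : x ∈ Λ
      · have h1 : patch Λ (TmapF Λ ω a θ) ω x = a :=
          patch_Tmap_nbr hxΛ hx0 (hxval ▸ neg_ee_mem_NsetF i)
        rw [h1]
        exact hsafe1 _
      · have h1 : patch Λ (TmapF Λ ω a θ) ω x = ω x := patch_of_not_mem hxΛ
        have h2 : patch Λ (TmapF Λ ω a θ) ω (x + ee d i) = ω (x + ee d i) := by
          rw [hy0]; exact patch_Tmap_zero
        rw [h1, h2]
        exact hωfeas x
    · by_cases hxa : x ∈ Λ ∧ x ∈ NsetF d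
      · have h1 : patch Λ (TmapF Λ ω a θ) ω x = a := patch_Tmap_nbr hxa.1 hx0 hxa.2
        rw [h1]
        exact hsafe1 _
      · by_cases hya : x + ee d i ∈ Λ ∧ x + ee d i ∈ NsetF d
        · have h2 : patch Λ (TmapF Λ ω a θ) ω (x + ee d i) = a :=
            patch_Tmap_nbr hya.1 hy0 hya.2
          rw [h2]
          exact hsafe2 _
        · have h1 : patch Λ (TmapF Λ ω a θ) ω x = patch Λ θ ω x := by
            rcases not_and_or.mp hxa with h | h
            · rw [patch_of_not_mem h, patch_of_not_mem h]
            · exact patch_Tmap_of_not_mem_N h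
          have h2 : patch Λ (TmapF Λ ω a θ) ω (x + ee d i) = patch Λ θ ω (x + ee d i) := by
            rcases not_and_or.mp hya with h | h
            · rw [patch_of_not_mem h, patch_of_not_mem h]
            · exact patch_Tmap_of_not_mem_N h
          rw [h1, h2]
          exact hfeas x hx i hxi

lemma sum_pert {β : Type} [DecidableEq β] (s t : Finset β) (u v : β → ℝ) {c : ℝ}
    (hc : 0 ≤ c) (h : ∀ x ∈ s, u x ≤ v x + if x ∈ t then c else 0) :
    ∑ x ∈ s, u x ≤ (∑ x ∈ s, v x) + c * t.card := by
  calc ∑ x ∈ s, u x ≤ ∑ x ∈ s, (v x + if x ∈ t then c else 0) := Finset.sum_le_sum h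
    _ = (∑ x ∈ s, v x) + ∑ x ∈ s, (if x ∈ t then c else 0) := Finset.sum_add_distrib
    _ ≤ (∑ x ∈ s, v x) + c * t.card := by
        have h1 : ∑ x ∈ s, (if x ∈ t then c else 0) = ∑ _x ∈ s ∩ t, c :=
          Finset.sum_ite_mem s t fun _ => c
        rw [h1, Finset.sum_const, nsmul_eq_mul]
        have h2 : ((s ∩ t).card : ℝ) ≤ (t.card : ℝ) := by
          exact_mod_cast Finset.card_le_card (Finset.inter_subset_right)
        nlinarith

/-- A uniform bound for the interaction. -/
noncomputable def Mb (Φ₀ : A → ℝ) (Φ₁ : Fin d → A → A → ℝ) : ℝ :=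
  (∑ b : A, |Φ₀ b|) + ∑ i : Fin d, ∑ b : A, ∑ c : A, |Φ₁ i b c|

lemma Mb_nonneg (Φ₀ : A → ℝ) (Φ₁ : Fin d → A → A → ℝ) : 0 ≤ Mb Φ₀ Φ₁ := by
  unfold Mb; positivity

lemma abs_Phi0_le (Φ₀ : A → ℝ) (Φ₁ : Fin d → A → A → ℝ) (b : A) :
    |Φ₀ b| ≤ Mb Φ₀ Φ₁ := by
  unfold Mb
  have h1 : |Φ₀ b| ≤ ∑ b : A, |Φ₀ b| :=
    Finset.single_le_sum (f := fun b => |Φ₀ b|) (fun _ _ => abs_nonneg _) (Finset.mem_univ b)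
  have h2 : (0:ℝ) ≤ ∑ i : Fin d, ∑ b : A, ∑ c : A, |Φ₁ i b c| := by positivity
  linarith

lemma abs_Phi1_le (Φ₀ : A → ℝ) (Φ₁ : Fin d → A → A → ℝ) (i : Fin d) (b c : A) :
    |Φ₁ i b c| ≤ Mb Φ₀ Φ₁ := by
  unfold Mb
  have h1 : |Φ₁ i b c| ≤ ∑ c' : A, |Φ₁ i b c'| :=
    Finset.single_le_sum (f := fun c' => |Φ₁ i b c'|) (fun _ _ => abs_nonneg _) (Finset.mem_univ c)
  have h2 : ∑ c' : A, |Φ₁ i b c'| ≤ ∑ b' : A, ∑ c' : A, |Φ₁ i b' c'| :=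
    Finset.single_le_sum (f := fun b' => ∑ c' : A, |Φ₁ i b' c'|)
      (fun _ _ => by positivity) (Finset.mem_univ b)
  have h3 : ∑ b' : A, ∑ c' : A, |Φ₁ i b' c'| ≤
      ∑ i' : Fin d, ∑ b' : A, ∑ c' : A, |Φ₁ i' b' c'| :=
    Finset.single_le_sum (f := fun i' => ∑ b' : A, ∑ c' : A, |Φ₁ i' b' c'|)
      (fun _ _ => by positivity) (Finset.mem_univ i)
  have h0 : (0:ℝ) ≤ ∑ b : A, |Φ₀ b| := by positivity
  linarith

/-- The uniform energy-perturbation constant. -/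
noncomputable def Cb (d : ℕ) {A : Type} [Fintype A] (Φ₀ : A → ℝ)
    (Φ₁ : Fin d → A → A → ℝ) : ℝ :=
  2 * Mb Φ₀ Φ₁ * (NsetF d).card + d * (2 * Mb Φ₀ Φ₁ * (2 * (NsetF d).card))

lemma energy_Tmap (Φ₀ : A → ℝ) (Φ₁ : Fin d → A → A → ℝ) (Λ : Finset (Site d))
    (ω : Site d → A) (a : A) (θ : {x // x ∈ Λ} → A) :
    energy Φ₀ Φ₁ (closureF Λ) (patch Λ (TmapF Λ ω a θ) ω)
      ≤ energy Φ₀ Φ₁ (closureF Λ) (patch Λ θ ω) + Cb d Φ₀ Φ₁ := by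
  set M := Mb Φ₀ Φ₁ with hMdef
  have hM : 0 ≤ M := Mb_nonneg Φ₀ Φ₁
  set K := ((NsetF d).card : ℝ) with hKdef
  have hK : 0 ≤ K := by positivity
  set σ' := patch Λ (TmapF Λ ω a θ) ω with hσ'
  set σ := patch Λ θ ω with hσ
  have hagree : ∀ z, z ∉ NsetF d → σ' z = σ z := fun z hz => patch_Tmap_of_not_mem_N hz
  have habs : ∀ b : A, -M ≤ Φ₀ b ∧ Φ₀ b ≤ M := by
    intro b
    have := abs_Phi0_le Φ₀ Φ₁ b
    constructor <;> [linarith [neg_abs_le (Φ₀ b)]; linarith [le_abs_self (Φ₀ b)]]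
  have habs1 : ∀ (i : Fin d) (b c : A), -M ≤ Φ₁ i b c ∧ Φ₁ i b c ≤ M := by
    intro i b c
    have := abs_Phi1_le Φ₀ Φ₁ i b c
    constructor <;> [linarith [neg_abs_le (Φ₁ i b c)]; linarith [le_abs_self (Φ₁ i b c)]]
  have hsite : ∑ x ∈ closureF Λ, Φ₀ (σ' x) ≤ (∑ x ∈ closureF Λ, Φ₀ (σ x)) + 2 * M * K := by
    refine sum_pert (closureF Λ) (NsetF d) _ _ (by linarith) ?_
    intro x _
    show Φ₀ (σ' x) ≤ Φ₀ (σ x) + if x ∈ NsetF d then 2 * M else 0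
    by_cases hxN : x ∈ NsetF d
    · rw [if_pos hxN]
      have h1 := habs (σ' x)
      have h2 := habs (σ x)
      linarith [h1.2, h2.1]
    · rw [if_neg hxN, hagree x hxN]
      simp
  have hbond : ∀ i : Fin d,
      ∑ x ∈ (closureF Λ).filter (fun x => x + ee d i ∈ closureF Λ),
          Φ₁ i (σ' x) (σ' (x + ee d i))
        ≤ (∑ x ∈ (closureF Λ).filter (fun x => x + ee d i ∈ closureF Λ),
            Φ₁ i (σ x) (σ (x + ee d i))) + 2 * M * (2 * K) := by
    intro i
    set t := NsetF d ∪ (NsetF d).image (· - ee d i) with htdef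
    have hcard : (t.card : ℝ) ≤ 2 * K := by
      have h1 := Finset.card_union_le (NsetF d) ((NsetF d).image (· - ee d i))
      have h2 := Finset.card_image_le (s := NsetF d) (f := (· - ee d i))
      have : t.card ≤ 2 * (NsetF d).card := by rw [htdef]; omega
      rw [hKdef]
      exact_mod_cast this
    have hp := sum_pert ((closureF Λ).filter (fun x => x + ee d i ∈ closureF Λ)) t
      (fun x => Φ₁ i (σ' x) (σ' (x + ee d i))) (fun x => Φ₁ i (σ x) (σ (x + ee d i)))
      (c := 2 * M) (by linarith) ?_
    · have : 2 * M * (t.card : ℝ) ≤ 2 * M * (2 * K) := by nlinarith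
      linarith
    · intro x _
      show Φ₁ i (σ' x) (σ' (x + ee d i)) ≤
        Φ₁ i (σ x) (σ (x + ee d i)) + if x ∈ t then 2 * M else 0
      by_cases hxt : x ∈ t
      · rw [if_pos hxt]
        have h1 := habs1 i (σ' x) (σ' (x + ee d i))
        have h2 := habs1 i (σ x) (σ (x + ee d i))
        linarith [h1.2, h2.1]
      · have hxN : x ∉ NsetF d := fun h => hxt (Finset.mem_union_left _ h)
        have hyN : x + ee d i ∉ NsetF d := by
          intro h
          refine hxt (Finset.mem_union_right _ ?_)
          refine Finset.mem_image.mpr ⟨x + ee d i, h, ?_⟩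
          simp
        rw [if_neg hxt, hagree x hxN, hagree _ hyN]
        simp
  show energy Φ₀ Φ₁ (closureF Λ) σ' ≤ energy Φ₀ Φ₁ (closureF Λ) σ + Cb d Φ₀ Φ₁
  unfold energy Cb
  have hb2 : ∑ i : Fin d, ∑ x ∈ (closureF Λ).filter (fun x => x + ee d i ∈ closureF Λ),
      Φ₁ i (σ' x) (σ' (x + ee d i))
      ≤ (∑ i : Fin d, ∑ x ∈ (closureF Λ).filter (fun x => x + ee d i ∈ closureF Λ),
          Φ₁ i (σ x) (σ (x + ee d i))) + d * (2 * M * (2 * K)) := by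
    calc ∑ i : Fin d, ∑ x ∈ (closureF Λ).filter (fun x => x + ee d i ∈ closureF Λ),
        Φ₁ i (σ' x) (σ' (x + ee d i))
        ≤ ∑ i : Fin d, ((∑ x ∈ (closureF Λ).filter (fun x => x + ee d i ∈ closureF Λ),
            Φ₁ i (σ x) (σ (x + ee d i))) + 2 * M * (2 * K)) :=
          Finset.sum_le_sum fun i _ => hbond i
      _ = _ := by
          rw [Finset.sum_add_distrib, Finset.sum_const, Finset.card_univ,
            Fintype.card_fin, nsmul_eq_mul]
  rw [← hMdef, ← hKdef]
  linarith

lemma bWeight_Tmap (E : Fin d → Set (A × A)) (Φ₀ : A → ℝ) (Φ₁ : Fin d → A → A → ℝ)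
    {a : A} (hsafe : SafeSymbol E a) (Λ : Finset (Site d)) {ω : Site d → A}
    (hω : ω ∈ Omega E) (θ : {x // x ∈ Λ} → A) :
    bWeight E Φ₀ Φ₁ Λ ω θ
      ≤ Real.exp (Cb d Φ₀ Φ₁) * bWeight E Φ₀ Φ₁ Λ ω (TmapF Λ ω a θ) := by
  unfold bWeight
  by_cases hfeas : FeasibleOn E ↑(closureF Λ) (patch Λ θ ω)
  · rw [if_pos hfeas, if_pos (feasible_Tmap hsafe hω Λ θ hfeas), ← Real.exp_add]
    apply Real.exp_le_exp.mpr
    have := energy_Tmap Φ₀ Φ₁ Λ ω a θ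
    linarith
  · rw [if_neg hfeas]
    apply mul_nonneg (Real.exp_pos _).le
    split
    · exact (Real.exp_pos _).le
    · exact le_refl _

lemma den_pos (E : Fin d → Set (A × A)) (Φ₀ : A → ℝ) (Φ₁ : Fin d → A → A → ℝ)
    {a : A} (hsafe : SafeSymbol E a) (Λ : Finset (Site d)) {ω : Site d → A}
    (hω : ω ∈ Omega E) :
    0 < ∑ θ : {x // x ∈ Λ} → A, bWeight E Φ₀ Φ₁ Λ ω θ := by
  apply Finset.sum_pos' (fun θ _ => bWeight_nonneg E Φ₀ Φ₁ Λ ω θ)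
  refine ⟨fun _ => a, Finset.mem_univ _, ?_⟩
  unfold bWeight
  rw [if_pos ?_]
  · exact Real.exp_pos _
  · intro x _ i _
    by_cases hxΛ : x ∈ Λ
    · rw [patch_of_mem hxΛ]
      exact (hsafe i _).1
    · rw [patch_of_not_mem hxΛ]
      by_cases hyΛ : x + ee d i ∈ Λ
      · rw [patch_of_mem hyΛ]
        exact (hsafe i _).2
      · rw [patch_of_not_mem hyΛ]
        exact hω x (Set.mem_univ _) i (Set.mem_univ _)

lemma fiber_card_le (Λ : Finset (Site d)) (ω : Site d → A) (a : A)
    (b : {x // x ∈ Λ} → A) :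
    ((Finset.univ : Finset ({x // x ∈ Λ} → A)).filter
        fun θ => TmapF Λ ω a θ = b).card
      ≤ Fintype.card A ^ (NsetF d).card := by
  have key := Finset.card_le_card_of_injOn
    (f := fun (θ : {x // x ∈ Λ} → A) (y : {x // x ∈ NsetF d}) =>
      if h : (y : Site d) ∈ Λ then θ ⟨y, h⟩ else a)
    (s := (Finset.univ : Finset ({x // x ∈ Λ} → A)).filter fun θ => TmapF Λ ω a θ = b)
    (t := (Finset.univ : Finset ({x // x ∈ NsetF d} → A)))
    (fun _ _ => Finset.mem_univ _) ?_
  · calc ((Finset.univ : Finset ({x // x ∈ Λ} → A)).filter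
        fun θ => TmapF Λ ω a θ = b).card
        ≤ (Finset.univ : Finset ({x // x ∈ NsetF d} → A)).card := key
      _ = Fintype.card ({x // x ∈ NsetF d} → A) := Finset.card_univ
      _ = Fintype.card A ^ (NsetF d).card := by
          rw [Fintype.card_fun, Fintype.card_coe]
  · intro θ₁ h1 θ₂ h2 heq
    have hb1 : TmapF Λ ω a θ₁ = b := (Finset.mem_filter.mp h1).2
    have hb2 : TmapF Λ ω a θ₂ = b := (Finset.mem_filter.mp h2).2
    funext x
    by_cases hxN : (x : Site d) ∈ NsetF d
    · have := congrFun heq ⟨(x : Site d), hxN⟩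
      simpa [x.2] using this
    · have hx0 : (x : Site d) ≠ 0 := fun h => hxN (h ▸ zero_mem_NsetF)
      have e1 : TmapF Λ ω a θ₁ x = θ₁ x := by
        unfold TmapF; rw [if_neg hx0, if_neg hxN]
      have e2 : TmapF Λ ω a θ₂ x = θ₂ x := by
        unfold TmapF; rw [if_neg hx0, if_neg hxN]
      rw [← e1, ← e2, hb1, hb2]

lemma piAt_ge (E : Fin d → Set (A × A)) (Φ₀ : A → ℝ) (Φ₁ : Fin d → A → A → ℝ)
    {a : A} (hsafe : SafeSymbol E a) (Λ : Finset (Site d)) (h0 : (0 : Site d) ∈ Λ)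
    {ω : Site d → A} (hω : ω ∈ Omega E) :
    (Real.exp (Cb d Φ₀ Φ₁) * (Fintype.card A : ℝ) ^ (NsetF d).card)⁻¹
      ≤ piAt E Φ₀ Φ₁ Λ ω := by
  have hApos : (0 : ℝ) < Fintype.card A := by
    have : Nonempty A := ⟨a⟩
    exact_mod_cast Fintype.card_pos
  set KA := (Fintype.card A : ℝ) ^ (NsetF d).card with hKAdef
  have hKA : 0 < KA := by positivity
  have hE : 0 < Real.exp (Cb d Φ₀ Φ₁) := Real.exp_pos _
  simp only [piAt, piProb]
  set w := fun θ : {x // x ∈ Λ} → A => bWeight E Φ₀ Φ₁ Λ ω θ with hwdef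
  have hwnn : ∀ θ, 0 ≤ w θ := fun θ => bWeight_nonneg E Φ₀ Φ₁ Λ ω θ
  set Num := ∑ θ : {x // x ∈ Λ} → A, if patch Λ θ ω 0 = ω 0 then w θ else 0 with hNumdef
  set Den := ∑ θ : {x // x ∈ Λ} → A, w θ with hDendef
  have hDen : 0 < Den := den_pos E Φ₀ Φ₁ hsafe Λ hω
  have step1 : Den ≤ Real.exp (Cb d Φ₀ Φ₁) *
      ∑ θ : {x // x ∈ Λ} → A, w (TmapF Λ ω a θ) := by
    rw [Finset.mul_sum]
    exact Finset.sum_le_sum fun θ _ => bWeight_Tmap E Φ₀ Φ₁ hsafe Λ hω θ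
  have step2 : ∑ θ : {x // x ∈ Λ} → A, w (TmapF Λ ω a θ) ≤ KA * Num := by
    rw [Finset.sum_comp (w) (TmapF Λ ω a)]
    have himg : ∀ b ∈ Finset.univ.image (TmapF Λ ω a), patch Λ b ω 0 = ω 0 := by
      intro b hb
      obtain ⟨θ, _, rfl⟩ := Finset.mem_image.mp hb
      exact patch_Tmap_zero
    calc ∑ b ∈ Finset.univ.image (TmapF Λ ω a),
        (Finset.univ.filter fun θ => TmapF Λ ω a θ = b).card • w b
        ≤ ∑ b ∈ Finset.univ.image (TmapF Λ ω a), KA * w b := by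
          refine Finset.sum_le_sum fun b _ => ?_
          rw [nsmul_eq_mul]
          refine mul_le_mul_of_nonneg_right ?_ (hwnn b)
          rw [hKAdef]
          exact_mod_cast fiber_card_le Λ ω a b
      _ = KA * ∑ b ∈ Finset.univ.image (TmapF Λ ω a), w b := by rw [Finset.mul_sum]
      _ ≤ KA * Num := by
          refine mul_le_mul_of_nonneg_left ?_ hKA.le
          have e1 : ∑ b ∈ Finset.univ.image (TmapF Λ ω a), w b
              = ∑ b ∈ Finset.univ.image (TmapF Λ ω a),
                  if patch Λ b ω 0 = ω 0 then w b else 0 :=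
            Finset.sum_congr rfl fun b hb => by rw [if_pos (himg b hb)]
          rw [e1, hNumdef]
          refine Finset.sum_le_sum_of_subset_of_nonneg (Finset.subset_univ _) ?_
          intro b _ _
          split
          · exact hwnn b
          · exact le_refl _
  have key : Den ≤ (Real.exp (Cb d Φ₀ Φ₁) * KA) * Num := by
    calc Den ≤ Real.exp (Cb d Φ₀ Φ₁) * ∑ θ : {x // x ∈ Λ} → A, w (TmapF Λ ω a θ) := step1
      _ ≤ Real.exp (Cb d Φ₀ Φ₁) * (KA * Num) := by
          exact mul_le_mul_of_nonneg_left step2 hE.le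
      _ = (Real.exp (Cb d Φ₀ Φ₁) * KA) * Num := by ring
  have hfinal : (Real.exp (Cb d Φ₀ Φ₁) * KA)⁻¹ * Den ≤ Num := by
    calc (Real.exp (Cb d Φ₀ Φ₁) * KA)⁻¹ * Den
        ≤ (Real.exp (Cb d Φ₀ Φ₁) * KA)⁻¹ * ((Real.exp (Cb d Φ₀ Φ₁) * KA) * Num) := by
          refine mul_le_mul_of_nonneg_left key (by positivity)
      _ = Num := by field_simp
  rw [le_div_iff₀ hDen]
  refine le_trans hfinal (le_of_eq ?_)
  rw [hNumdef, hwdef]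
  refine Finset.sum_congr rfl fun θ _ => ?_
  congr!

lemma cylinder_congr {Λ : Finset (Site d)} {θ θ' : Site d → A}
    (h : ∀ x ∈ Λ, θ x = θ' x) : cylinder Λ θ = cylinder Λ θ' := by
  ext σ
  constructor <;> intro hσ x hx
  · rw [hσ x hx, h x hx]
  · rw [hσ x hx, ← h x hx]

lemma measSupport_nonempty [MeasurableSpace A] (a : A) (ν : Measure (Site d → A))
    [IsProbabilityMeasure ν] : (measSupport ν).Nonempty := by
  by_contra hne
  rw [Set.not_nonempty_iff_eq_empty] at hne
  have hall : ∀ ω : Site d → A, ∃ Λ : Finset (Site d), ν (cylinder Λ ω) = 0 := by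
    intro ω
    by_contra h
    push_neg at h
    have hmem : ω ∈ measSupport ν := fun Λ => pos_iff_ne_zero.mpr (h Λ)
    rw [hne] at hmem
    exact hmem
  let I := Σ Λ : Finset (Site d), ({x // x ∈ Λ} → A)
  let sfun : I → Set (Site d → A) := fun p => cylinder p.1 (patch p.1 p.2 fun _ => a)
  let J := {p : I // ν (sfun p) = 0}
  have hcover : (Set.univ : Set (Site d → A)) ⊆ ⋃ j : J, sfun j.val := by
    intro ω _
    obtain ⟨Λ, hΛ⟩ := hall ω
    have hpatch : cylinder Λ (patch Λ (fun x : {x // x ∈ Λ} => ω x.val) fun _ => a)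
        = cylinder Λ ω :=
      cylinder_congr fun x hx => patch_of_mem hx
    refine Set.mem_iUnion.mpr ⟨⟨⟨Λ, fun x => ω x.val⟩, ?_⟩, ?_⟩
    · show ν (cylinder Λ (patch Λ (fun x : {x // x ∈ Λ} => ω x.val) fun _ => a)) = 0
      rw [hpatch]
      exact hΛ
    · show ω ∈ cylinder Λ (patch Λ (fun x : {x // x ∈ Λ} => ω x.val) fun _ => a)
      rw [hpatch]
      exact fun x hx => rfl
  have hz : ν (⋃ j : J, sfun j.val) = 0 := measure_iUnion_null fun j => j.2
  have : ν Set.univ = 0 :=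
    le_antisymm (le_trans (measure_mono hcover) hz.le) zero_le
  rw [measure_univ] at this
  exact one_ne_zero this

end SafeAux

/-- Lemma 6.4: a safe symbol forces `c_π(ν) > 0` for every
shift-invariant measure supported in `Ω(ℰ)`. -/
theorem safe_symbol_cpi_pos
    {d : ℕ} {A : Type} [Fintype A] [DecidableEq A] [MeasurableSpace A]
    (E : Fin d → Set (A × A)) (Φ₀ : A → ℝ) (Φ₁ : Fin d → A → A → ℝ)
    (hΩ : (Omega E).Nonempty) (a : A) (hsafe : SafeSymbol E a)
    (ν : Measure (Site d → A)) [IsProbabilityMeasure ν]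
    (hinv : ShiftInvariant ν) (hsupp : measSupport ν ⊆ Omega E) :
    0 < cpi E Φ₀ Φ₁ (measSupport ν) := by
  classical
  have hApos : (0 : ℝ) < Fintype.card A := by
    have : Nonempty A := ⟨a⟩
    exact_mod_cast Fintype.card_pos
  have hc : 0 < (Real.exp (Cb d Φ₀ Φ₁) * (Fintype.card A : ℝ) ^ (NsetF d).card)⁻¹ := by
    positivity
  obtain ⟨ω₀, hω₀⟩ := measSupport_nonempty a ν
  have hSne : {r | ∃ Λ : Finset (Site d), (0 : Site d) ∈ Λ ∧
      ∃ ω ∈ measSupport ν, r = piAt E Φ₀ Φ₁ Λ ω}.Nonempty :=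
    ⟨piAt E Φ₀ Φ₁ {0} ω₀, {0}, Finset.mem_singleton_self 0, ω₀, hω₀, rfl⟩
  have hlb : ∀ r ∈ {r | ∃ Λ : Finset (Site d), (0 : Site d) ∈ Λ ∧
      ∃ ω ∈ measSupport ν, r = piAt E Φ₀ Φ₁ Λ ω},
      (Real.exp (Cb d Φ₀ Φ₁) * (Fintype.card A : ℝ) ^ (NsetF d).card)⁻¹ ≤ r := by
    rintro r ⟨Λ, h0, ω, hωs, rfl⟩
    exact piAt_ge E Φ₀ Φ₁ hsafe Λ h0 (hsupp hωs)
  exact lt_of_lt_of_le hc (le_csInf hSne hlb)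
end Paper
end
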